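/- Suppose the pair (u,p) ∈ V × Q satisfies ν·a(u,v) + b(v,p) + γ·j(u,v) = F(v) for all v ∈ V and b(u,q) = 0 for all q ∈ Q. Then β·‖p‖_Q ≤ C_PF·(1 + M/C_σ)·L. (This is the abstract form of the pressure stability estimate (22c) of Lemma 3.2: on the normal-continuous test space the jump penalization vanishes, so the discrete inf-sup condition together with the velocity energy estimate bounds the discrete pressure by the data.) -/

import Mathlib

/-- Abstract form of the pressure stability estimate (22c) of Lemma 3.2: on the
normal-continuous test space `W` the jump penalization vanishes, so the discrete
inf-sup condition together with the velocity energy estimate bounds the discrete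
pressure by the data. The instance norm `‖·‖` on `V` is the energy norm. -/
theorem energy_estimate_pressure
    (V : Type*) [NormedAddCommGroup V] [NormedSpace ℝ V] [FiniteDimensional ℝ V]
    (Q : Type*) [NormedAddCommGroup Q] [NormedSpace ℝ Q] [FiniteDimensional ℝ Q]
    (l2 : V → ℝ)
    (hl2_add : ∀ v w : V, l2 (v + w) ≤ l2 v + l2 w)
    (hl2_smul : ∀ (c : ℝ) (v : V), l2 (c • v) = |c| * l2 v)
    (hl2_def : ∀ v : V, l2 v = 0 → v = 0)
    (C_PF C_σ M β ν γ L : ℝ)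
    (hCPF : 0 < C_PF) (hCσ : 0 < C_σ) (hM : 0 < M) (hβ : 0 < β)
    (hν : 0 < ν) (hγ : 0 < γ) (hL : 0 ≤ L)
    (hPF : ∀ v : V, l2 v ≤ C_PF * ‖v‖)
    (a j : V →ₗ[ℝ] V →ₗ[ℝ] ℝ)
    (hcoer : ∀ v : V, C_σ * ‖v‖ ^ 2 ≤ a v v)
    (hbound : ∀ v w : V, |a v w| ≤ M * ‖v‖ * ‖w‖)
    (hjsymm : ∀ v w : V, j v w = j w v)
    (hjpos : ∀ v : V, 0 ≤ j v v)
    (b : V →ₗ[ℝ] Q →ₗ[ℝ] ℝ)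
    (W : Submodule ℝ V)
    (hjW : ∀ v : V, ∀ w ∈ W, j v w = 0)
    (hinfsup : ∀ q : Q, ∃ w ∈ W, w ≠ 0 ∧ β * ‖q‖ * ‖w‖ ≤ b w q)
    (F : V →ₗ[ℝ] ℝ)
    (hF : ∀ v : V, |F v| ≤ L * l2 v)
    (u : V) (p : Q)
    (hup : ∀ v : V, ν * a u v + b v p + γ * j u v = F v)
    (hdiv : ∀ q : Q, b u q = 0) :
    β * ‖p‖ ≤ C_PF * (1 + M / C_σ) * L := by
  -- velocity estimate: ν * C_σ * ‖u‖ ≤ C_PF * L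
  have hl2u : l2 u ≤ C_PF * ‖u‖ := hPF u
  have hl2nonneg : ∀ v : V, 0 ≤ l2 v := by
    intro v
    have h : l2 ((-1 : ℝ) • v) = l2 v := by rw [hl2_smul]; simp
    have h2 := hl2_add v ((-1 : ℝ) • v)
    have hz : v + (-1 : ℝ) • v = 0 := by simp
    rw [hz] at h2
    have h0 : l2 (0 : V) = 0 := by
      have := hl2_smul 0 (0 : V); simpa using this
    rw [h0, h] at h2
    linarith
  have hu : ν * C_σ * ‖u‖ ≤ C_PF * L := by
    rcases eq_or_ne u 0 with rfl | hu0
    · simp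
      positivity
    · have hun : 0 < ‖u‖ := norm_pos_iff.mpr hu0
      have key : ν * a u u + γ * j u u = F u := by
        have := hup u
        rw [hdiv p] at this
        linarith
      have h1 : ν * (C_σ * ‖u‖ ^ 2) ≤ ν * a u u :=
        mul_le_mul_of_nonneg_left (hcoer u) hν.le
      have h2 : F u ≤ L * l2 u := le_trans (le_abs_self _) (hF u)
      have h3 : L * l2 u ≤ L * (C_PF * ‖u‖) :=
        mul_le_mul_of_nonneg_left hl2u hL
      have h4 : ν * (C_σ * ‖u‖ ^ 2) ≤ L * (C_PF * ‖u‖) := by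
        have hj := hjpos u
        nlinarith
      have := (mul_le_mul_iff_of_pos_right hun).mp (by nlinarith : (ν * C_σ * ‖u‖) * ‖u‖ ≤ (C_PF * L) * ‖u‖)
      exact this
  obtain ⟨w, hwW, hw0, hbw⟩ := hinfsup p
  have hwn : 0 < ‖w‖ := norm_pos_iff.mpr hw0
  have hjw : j u w = 0 := hjW u w hwW
  have hbwp : b w p = F w - ν * a u w := by
    have := hup w
    rw [hjw] at this
    linarith
  have hFw : F w ≤ C_PF * L * ‖w‖ := by
    have h2 := le_trans (le_abs_self _) (hF w)
    have h3 : L * l2 w ≤ L * (C_PF * ‖w‖) := mul_le_mul_of_nonneg_left (hPF w) hL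
    nlinarith
  have hauw : -(ν * a u w) ≤ M * (ν * ‖u‖) * ‖w‖ := by
    have h := (abs_le.mp (hbound u w)).1
    nlinarith
  have hνu : M * (ν * ‖u‖) ≤ M / C_σ * (C_PF * L) := by
    have : ν * ‖u‖ ≤ C_PF * L / C_σ := by
      rw [le_div_iff₀ hCσ]; nlinarith
    calc M * (ν * ‖u‖) ≤ M * (C_PF * L / C_σ) := mul_le_mul_of_nonneg_left this hM.le
      _ = M / C_σ * (C_PF * L) := by ring
  have final : β * ‖p‖ * ‖w‖ ≤ C_PF * (1 + M / C_σ) * L * ‖w‖ := by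
    calc β * ‖p‖ * ‖w‖ ≤ b w p := hbw
      _ = F w - ν * a u w := hbwp
      _ ≤ C_PF * L * ‖w‖ + M * (ν * ‖u‖) * ‖w‖ := by linarith
      _ ≤ C_PF * L * ‖w‖ + M / C_σ * (C_PF * L) * ‖w‖ :=
          by nlinarith [mul_le_mul_of_nonneg_right hνu hwn.le]
      _ = C_PF * (1 + M / C_σ) * L * ‖w‖ := by ring
  exact le_of_mul_le_mul_right final hwn
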